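/- Discrete kinetic energy evolution identity: Assume N_v ≥ 2 and fix a species s. Suppose the fully discrete Fourier–Hermite Vlasov equations hold for species s at the indices (n,k) = (0,0), (1,0), and (2,0). Then 𝓔_k^{s,j+1} = 𝓔_k^{s,j} + Δt·q^s·α^s·L·Σ_{ℓ=−N_x}^{N_x} ((α^s/√2)·Ĉ^{s,j+1/2}_{1,ℓ} + u^s·Ĉ^{s,j+1/2}_{0,ℓ})·Ê^{j+1/2}_{−ℓ}. -/

import Mathlib

open Finset

/-- Implicit midpoint value `X^{j+1/2} = (X^j + X^{j+1})/2`. -/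
noncomputable def midpt (a b : ℂ) : ℂ := (a + b) / 2

/-- The fully discrete Fourier–Hermite Vlasov equation with implicit midpoint
time stepping at index `(n,k)` for one species with mass `ms`, charge `qs`, and
Hermite parameters `αs`, `us`.  `Cj Cj1 : ℤ → ℤ → ℂ` are the Hermite–Fourier
coefficients of the distribution function at time levels `j` and `j+1`, and
`Ej Ej1 : ℤ → ℂ` those of the electric field. -/
noncomputable def vlasovEq (Nx : ℕ) (L Δt ms qs αs us : ℝ)
    (Cj Cj1 : ℤ → ℤ → ℂ) (Ej Ej1 : ℤ → ℂ) (n k : ℤ) : Prop :=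
  (Cj1 n k - Cj n k) / (Δt : ℂ)
    + (Real.sqrt ((n : ℝ) / 2) : ℂ) * (2 * (Real.pi : ℂ) * Complex.I * (k : ℂ) / (L : ℂ)) *
        (αs : ℂ) * midpt (Cj (n - 1) k) (Cj1 (n - 1) k)
    + (2 * (Real.pi : ℂ) * Complex.I * (k : ℂ) / (L : ℂ)) * (us : ℂ) *
        midpt (Cj n k) (Cj1 n k)
    + (Real.sqrt (((n : ℝ) + 1) / 2) : ℂ) * (2 * (Real.pi : ℂ) * Complex.I * (k : ℂ) / (L : ℂ)) *
        (αs : ℂ) * midpt (Cj (n + 1) k) (Cj1 (n + 1) k)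
    - (Real.sqrt (2 * (n : ℝ)) : ℂ) * ((qs : ℂ) / ((ms : ℂ) * (αs : ℂ))) *
        ∑ ℓ ∈ Finset.Icc (-(Nx : ℤ)) (Nx : ℤ),
          midpt (Cj (n - 1) ℓ) (Cj1 (n - 1) ℓ) * midpt (Ej (k - ℓ)) (Ej1 (k - ℓ))
    = 0

/-- Discrete kinetic energy of a species at a time level with coefficients `C`. -/
noncomputable def kineticEnergy (L ms αs us : ℝ) (C : ℤ → ℤ → ℂ) : ℂ :=
  ((ms : ℂ) * (αs : ℂ) * (L : ℂ) / 2) *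
    (((us : ℂ) ^ 2 + (αs : ℂ) ^ 2 / 2) * C 0 0
      + (Real.sqrt 2 : ℂ) * (us : ℂ) * (αs : ℂ) * C 1 0
      + ((αs : ℂ) ^ 2 / (Real.sqrt 2 : ℂ)) * C 2 0)

/-- Discrete kinetic energy evolution identity. -/
theorem discrete_kinetic_energy_evolution (Nv Nx : ℕ) (hNv : 2 ≤ Nv)
    (L Δt : ℝ) (hL : 0 < L) (hΔt : 0 < Δt)
    (ms qs αs us : ℝ) (hms : 0 < ms) (hαs : 0 < αs)
    (Cj Cj1 : ℤ → ℤ → ℂ) (Ej Ej1 : ℤ → ℂ)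
    (hCjlo : ∀ k : ℤ, Cj (-1) k = 0) (hCj1lo : ∀ k : ℤ, Cj1 (-1) k = 0)
    (hCjhi : ∀ k : ℤ, Cj ((Nv : ℤ) + 1) k = 0) (hCj1hi : ∀ k : ℤ, Cj1 ((Nv : ℤ) + 1) k = 0)
    (hEj : ∀ k : ℤ, (Nx : ℤ) < |k| → Ej k = 0) (hEj1 : ∀ k : ℤ, (Nx : ℤ) < |k| → Ej1 k = 0)
    (hVlasov0 : vlasovEq Nx L Δt ms qs αs us Cj Cj1 Ej Ej1 0 0)
    (hVlasov1 : vlasovEq Nx L Δt ms qs αs us Cj Cj1 Ej Ej1 1 0)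
    (hVlasov2 : vlasovEq Nx L Δt ms qs αs us Cj Cj1 Ej Ej1 2 0) :
    kineticEnergy L ms αs us Cj1
      = kineticEnergy L ms αs us Cj
        + (Δt : ℂ) * (qs : ℂ) * (αs : ℂ) * (L : ℂ) *
          ∑ ℓ ∈ Finset.Icc (-(Nx : ℤ)) (Nx : ℤ),
            (((αs : ℂ) / (Real.sqrt 2 : ℂ)) * midpt (Cj 1 ℓ) (Cj1 1 ℓ)
              + (us : ℂ) * midpt (Cj 0 ℓ) (Cj1 0 ℓ)) * midpt (Ej (-ℓ)) (Ej1 (-ℓ)) := by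
  have hΔ : (Δt:ℂ) ≠ 0 := by exact_mod_cast hΔt.ne'
  have hm : (ms:ℂ) ≠ 0 := by exact_mod_cast hms.ne'
  have hα : (αs:ℂ) ≠ 0 := by exact_mod_cast hαs.ne'
  have hs2 : (Real.sqrt 2 : ℂ) ≠ 0 := by
    simp [Complex.ofReal_ne_zero, Real.sqrt_eq_zero']
  have hsq : (Real.sqrt 2 : ℂ) * (Real.sqrt 2 : ℂ) = 2 := by
    rw [← Complex.ofReal_mul, Real.mul_self_sqrt (by norm_num)]; norm_num
  have h4 : Real.sqrt (2*(2:ℝ)) = 2 := by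
    rw [show (2*(2:ℝ)) = 2^2 by norm_num, Real.sqrt_sq]; norm_num
  unfold vlasovEq at hVlasov0 hVlasov1 hVlasov2
  simp only [Int.cast_zero, Int.cast_one, Int.cast_two, mul_zero, zero_mul, zero_div,
    zero_add, add_zero, Real.sqrt_zero, zero_sub, h4, mul_one, Complex.ofReal_zero,
    sub_zero, Complex.ofReal_ofNat,
    show (1:ℤ) - 1 = 0 by norm_num, show (2:ℤ) - 1 = 1 by norm_num] at hVlasov0 hVlasov1 hVlasov2
  set S0 : ℂ := ∑ x ∈ Finset.Icc (-(Nx:ℤ)) (Nx:ℤ), midpt (Cj 0 x) (Cj1 0 x) * midpt (Ej (-x)) (Ej1 (-x)) with hS0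
  set S1 : ℂ := ∑ x ∈ Finset.Icc (-(Nx:ℤ)) (Nx:ℤ), midpt (Cj 1 x) (Cj1 1 x) * midpt (Ej (-x)) (Ej1 (-x)) with hS1
  have e0 : Cj1 0 0 = Cj 0 0 := by
    field_simp at hVlasov0
    exact sub_eq_zero.mp (hVlasov0.trans (mul_zero _))
  have e1 : (ms:ℂ) * (αs:ℂ) * (Cj1 1 0 - Cj 1 0) = (Δt:ℂ) * (Real.sqrt 2 : ℂ) * (qs:ℂ) * S0 := by
    field_simp at hVlasov1
    linear_combination hVlasov1
  have e2 : (ms:ℂ) * (αs:ℂ) * (Cj1 2 0 - Cj 2 0) = (Δt:ℂ) * 2 * (qs:ℂ) * S1 := by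
    field_simp at hVlasov2
    linear_combination hVlasov2
  have hsum : ∑ ℓ ∈ Finset.Icc (-(Nx:ℤ)) (Nx:ℤ),
      (((αs : ℂ) / (Real.sqrt 2 : ℂ)) * midpt (Cj 1 ℓ) (Cj1 1 ℓ)
        + (us : ℂ) * midpt (Cj 0 ℓ) (Cj1 0 ℓ)) * midpt (Ej (-ℓ)) (Ej1 (-ℓ))
      = ((αs : ℂ) / (Real.sqrt 2 : ℂ)) * S1 + (us : ℂ) * S0 := by
    rw [hS0, hS1, Finset.mul_sum, Finset.mul_sum, ← Finset.sum_add_distrib]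
    exact Finset.sum_congr rfl (fun x _ => by ring)
  have d1 : (αs:ℂ)^2 / (Real.sqrt 2 : ℂ) = (αs:ℂ)^2 * (Real.sqrt 2 : ℂ) / 2 := by
    rw [div_eq_div_iff hs2 (by norm_num : (2:ℂ) ≠ 0)]
    linear_combination -(αs:ℂ)^2 * hsq
  have d2 : (αs:ℂ) / (Real.sqrt 2 : ℂ) = (αs:ℂ) * (Real.sqrt 2 : ℂ) / 2 := by
    rw [div_eq_div_iff hs2 (by norm_num : (2:ℂ) ≠ 0)]
    linear_combination -(αs:ℂ) * hsq
  unfold kineticEnergy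
  rw [hsum, d1, d2]
  linear_combination ((ms:ℂ)*(αs:ℂ)*(L:ℂ)/2)*((us:ℂ)^2+(αs:ℂ)^2/2)*e0
    + ((αs:ℂ)*(L:ℂ)*(Real.sqrt 2:ℂ)*(us:ℂ)/2)*e1
    + ((αs:ℂ)^2*(L:ℂ)*(Real.sqrt 2:ℂ)/4)*e2
    + ((Δt:ℂ)*(qs:ℂ)*(αs:ℂ)*(L:ℂ)*(us:ℂ)*S0/2)*hsq
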